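/- Let (K_1,…,K_n) be a Cantor-type graph-directed attractor in ℝ^d with level-k approximations Q_{i,k}. Let P be a face of [0,1]^d of dimension at most d−1 and let i ∈ {1,…,n}. For every k ≥ 1, if there is a walk of length k in the graph G_P which starts from i, then P ∩ Q_{i,k} ≠ ∅. -/

import Mathlib

open Set

/-- The closed unit cube `[0,1]^d` in `ℝ^d`. -/
def unitCube (d : ℕ) : Set (Fin d → ℝ) := {x | ∀ m, x m ∈ Set.Icc (0 : ℝ) 1}

/-- The contracting similarity `x ↦ N⁻¹(x + t)` on `ℝ^d`. -/
noncomputable def cmap {d : ℕ} (N : ℕ) (t : Fin d → ℕ) (x : Fin d → ℝ) : Fin d → ℝ :=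
  fun m => (x m + t m) / N

/-- The face of `[0,1]^d` determined by an index set `s` and prescribed values `a`
(`a m ∈ {0,1}` for `m ∈ s`); its dimension is `d - s.card`. -/
def face {d : ℕ} (s : Finset (Fin d)) (a : Fin d → ℝ) : Set (Fin d → ℝ) :=
  {x | x ∈ unitCube d ∧ ∀ m ∈ s, x m = a m}

/-- A Cantor-type graph-directed system: a finite directed multigraph on `Fin n`
in which every vertex has an outgoing edge, together with translation vectors
`t e ∈ {0,…,N-1}^d`; distinct parallel edges carry distinct vectors. -/
structure CantorGDS (d N n : ℕ) where
  E : Type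
  fintypeE : Fintype E
  src : E → Fin n
  dst : E → Fin n
  t : E → Fin d → ℕ
  t_lt : ∀ e m, t e m < N
  exists_out : ∀ v : Fin n, ∃ e : E, src e = v
  distinct : ∀ e e' : E, src e = src e' → dst e = dst e' → t e = t e' → e = e'

namespace CantorGDS

/-- The map `φ_e(x) = N⁻¹(x + t_e)` associated with an edge. -/
noncomputable def phi {d N n : ℕ} (S : CantorGDS d N n) (e : S.E) : (Fin d → ℝ) → (Fin d → ℝ) :=
  cmap N (S.t e)

/-- `(K 1, …, K n)` is the Cantor-type graph-directed attractor of `S`: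
an `n`-tuple of nonempty compact sets with `K i = ⋃_{j} ⋃_{e ∈ E_{i,j}} φ_e(K j)`. -/
def IsAttractor {d N n : ℕ} (S : CantorGDS d N n) (K : Fin n → Set (Fin d → ℝ)) : Prop :=
  (∀ i, (K i).Nonempty) ∧ (∀ i, IsCompact (K i)) ∧
    (∀ i, K i = ⋃ e : S.E, ⋃ _ : S.src e = i, S.phi e '' K (S.dst e))

/-- The level-`k` approximations: `Q 0 i = [0,1]^d` and
`Q (k+1) i = ⋃_{j} ⋃_{e ∈ E_{i,j}} φ_e(Q k j)`. -/
def Q {d N n : ℕ} (S : CantorGDS d N n) : ℕ → Fin n → Set (Fin d → ℝ)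
  | 0, _ => unitCube d
  | (k+1), i => ⋃ e : S.E, ⋃ _ : S.src e = i, S.phi e '' CantorGDS.Q S k (S.dst e)

/-- A solid edge from `(i,j)` to `(i',j')` in the intersecting graph:
`i ≠ j` and there are `e ∈ E_{i,i'}`, `e' ∈ E_{j,j'}` with `φ_e = φ_{e'}`. -/
def SolidEdge {d N n : ℕ} (S : CantorGDS d N n) (i j i' j' : Fin n) : Prop :=
  i ≠ j ∧ ∃ e e' : S.E, S.src e = i ∧ S.dst e = i' ∧ S.src e' = j ∧ S.dst e' = j' ∧
    S.t e = S.t e'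

/-- `e, e'` witness a dashed edge: the cubes `φ_e([0,1]^d)` and `φ_{e'}([0,1]^d)` share a
nonempty common face of dimension at most `d-1`; equivalently `t_e ≠ t_{e'}` and every
coordinate of `t_e - t_{e'}` lies in `{-1,0,1}`. -/
def DashedWitness {d N n : ℕ} (S : CantorGDS d N n) (e e' : S.E) : Prop :=
  S.t e ≠ S.t e' ∧ ∀ m, ((S.t e m : ℤ) - (S.t e' m : ℤ)).natAbs ≤ 1

/-- A terminated edge from `(i,j)` to `(i',j')` in the intersecting graph: either a solid
edge with `i' = j'`, or a dashed edge witnessed by `e, e'` with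
`φ_e(K i') ∩ φ_{e'}(K j') ≠ ∅`. -/
def TerminatedEdge {d N n : ℕ} (S : CantorGDS d N n) (K : Fin n → Set (Fin d → ℝ))
    (i j i' j' : Fin n) : Prop :=
  i ≠ j ∧ ∃ e e' : S.E, S.src e = i ∧ S.dst e = i' ∧ S.src e' = j ∧ S.dst e' = j' ∧
    ((S.t e = S.t e' ∧ i' = j') ∨
      (DashedWitness S e e' ∧ (S.phi e '' K i' ∩ S.phi e' '' K j').Nonempty))

/-- A solid walk of length `m` in the intersecting graph starting from `(i,j)`. -/
def SolidWalkOfLength {d N n : ℕ} (S : CantorGDS d N n) (m : ℕ) (i j : Fin n) : Prop :=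
  ∃ p q : ℕ → Fin n, p 0 = i ∧ q 0 = j ∧
    ∀ k < m, SolidEdge S (p k) (q k) (p (k + 1)) (q (k + 1))

/-- An infinite solid walk in the intersecting graph starting from `(i,j)`. -/
def InfSolidWalk {d N n : ℕ} (S : CantorGDS d N n) (i j : Fin n) : Prop :=
  ∃ p q : ℕ → Fin n, p 0 = i ∧ q 0 = j ∧
    ∀ k, SolidEdge S (p k) (q k) (p (k + 1)) (q (k + 1))

/-- A terminated finite walk in the intersecting graph starting from `(i,j)`: a walk of
length `m + 1` whose first `m` edges are solid and whose last edge is terminated. -/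
def TerminatedWalk {d N n : ℕ} (S : CantorGDS d N n) (K : Fin n → Set (Fin d → ℝ))
    (i j : Fin n) : Prop :=
  ∃ m : ℕ, ∃ p q : ℕ → Fin n, p 0 = i ∧ q 0 = j ∧
    (∀ k < m, SolidEdge S (p k) (q k) (p (k + 1)) (q (k + 1))) ∧
    TerminatedEdge S K (p m) (q m) (p (m + 1)) (q (m + 1))

/-- The edge relation of the graph `G_P`: there is an edge from `i` to `j` whenever
`P ∩ ⋃_{e ∈ E_{i,j}} φ_e([0,1]^d) ≠ ∅`. -/
def GPEdge {d N n : ℕ} (S : CantorGDS d N n) (P : Set (Fin d → ℝ)) (i j : Fin n) : Prop :=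
  ∃ e : S.E, S.src e = i ∧ S.dst e = j ∧ (P ∩ S.phi e '' unitCube d).Nonempty

/-- There is a walk of length `k` in the graph `G_P` starting from `i`. -/
def GPWalk {d N n : ℕ} (S : CantorGDS d N n) (P : Set (Fin d → ℝ)) (i : Fin n) (k : ℕ) :
    Prop :=
  ∃ p : ℕ → Fin n, p 0 = i ∧ ∀ l < k, GPEdge S P (p l) (p (l + 1))

/-- `l` is a walk in the directed graph of `S` starting from vertex `i`. -/
def WalkFrom {d N n : ℕ} (S : CantorGDS d N n) (i : Fin n) (l : List S.E) : Prop :=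
  (∀ e ∈ l.head?, S.src e = i) ∧ List.Chain' (fun e e' => S.dst e = S.src e') l

/-- The terminal vertex of a walk `l` starting from `i` (equal to `i` if `l` is empty). -/
def ter {d N n : ℕ} (S : CantorGDS d N n) (i : Fin n) (l : List S.E) : Fin n :=
  l.getLast?.elim i S.dst

/-- For a walk `𝐞 = (e_1, …, e_k)`, the composition `φ_𝐞 = φ_{e_1} ∘ ⋯ ∘ φ_{e_k}`. -/
noncomputable def phiWalk {d N n : ℕ} (S : CantorGDS d N n) (l : List S.E) :
    (Fin d → ℝ) → (Fin d → ℝ) :=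
  l.foldr (fun e f => S.phi e ∘ f) id

/-- For an infinite walk `e`, the composition `φ_{e 0} ∘ ⋯ ∘ φ_{e (m-1)}` of its first
`m` maps. -/
noncomputable def compWalk {d N n : ℕ} (S : CantorGDS d N n) (e : ℕ → S.E) :
    ℕ → (Fin d → ℝ) → (Fin d → ℝ)
  | 0 => id
  | (m + 1) => CantorGDS.compWalk S e m ∘ S.phi (e m)

end CantorGDS

/-- The constant `c(n,d) = (d-1)n² + (n²+n)/2 + d - 1`. -/
def cConst (n d : ℕ) : ℕ := (d - 1) * n ^ 2 + (n ^ 2 + n) / 2 + d - 1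

lemma phi_mem_cube {d N n : ℕ} (hN : 2 ≤ N) (S : CantorGDS d N n) (e : S.E)
    {x : Fin d → ℝ} (hx : x ∈ unitCube d) : S.phi e x ∈ unitCube d := by
  intro m
  show (x m + S.t e m) / N ∈ Set.Icc (0:ℝ) 1
  rw [Set.mem_Icc]
  have h1 := (hx m).1
  have h2 := (hx m).2
  have ht : (S.t e m : ℝ) ≤ N - 1 := by
    have := S.t_lt e m
    have : (S.t e m : ℝ) + 1 ≤ N := by exact_mod_cast this
    linarith
  have hNpos : (0 : ℝ) < N := by positivity
  have ht0 : (0 : ℝ) ≤ S.t e m := by positivity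
  constructor
  · apply div_nonneg (by linarith) (le_of_lt hNpos)
  · rw [div_le_one hNpos]; linarith

lemma phi_mem_face {d N n : ℕ} (hN : 2 ≤ N) (S : CantorGDS d N n)
    (s : Finset (Fin d)) (a : Fin d → ℝ) (ha : ∀ m ∈ s, a m = 0 ∨ a m = 1)
    (e : S.E) (hne : (face s a ∩ S.phi e '' unitCube d).Nonempty)
    {y : Fin d → ℝ} (hy : y ∈ face s a) : S.phi e y ∈ face s a := by
  obtain ⟨z, hzP, w, hw, hwz⟩ := hne
  refine ⟨phi_mem_cube hN S e hy.1, ?_⟩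
  intro m hm
  have hNpos : (0 : ℝ) < N := by positivity
  have ht : (S.t e m : ℝ) ≤ N - 1 := by
    have := S.t_lt e m
    have : (S.t e m : ℝ) + 1 ≤ N := by exact_mod_cast this
    linarith
  have ht0 : (0 : ℝ) ≤ S.t e m := by positivity
  have hzm : (w m + S.t e m) / N = a m := by
    have := hzP.2 m hm
    rw [← hwz] at this
    exact this
  have hw1 := (hw m).1
  have hw2 := (hw m).2
  have hym : y m = a m := hy.2 m hm
  show (y m + S.t e m) / N = a m
  rcases ha m hm with h0 | h1
  · rw [h0] at hzm hym ⊢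
    have : w m + S.t e m = 0 := by
      field_simp at hzm; linarith [hzm]
    have htm : (S.t e m : ℝ) = 0 := by linarith
    rw [hym, htm]; simp
  · rw [h1] at hzm hym ⊢
    have hsum : w m + S.t e m = N := by
      field_simp at hzm; linarith [hzm]
    have htm : (S.t e m : ℝ) = N - 1 := by linarith
    rw [hym, htm]
    field_simp
    ring

lemma gpwalk_aux {d N n : ℕ} (hN : 2 ≤ N) (S : CantorGDS d N n)
    (s : Finset (Fin d)) (a : Fin d → ℝ) (ha : ∀ m ∈ s, a m = 0 ∨ a m = 1) :
    ∀ (k : ℕ) (i : Fin n), CantorGDS.GPWalk S (face s a) i k →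
      (face s a ∩ CantorGDS.Q S k i).Nonempty := by
  intro k
  induction k with
  | zero =>
    intro i _
    refine ⟨fun m => if m ∈ s then a m else 0, ⟨?_, ?_⟩, ?_⟩
    · intro m
      by_cases hm : m ∈ s
      · simp only [hm, if_true]
        rcases ha m hm with h | h <;> rw [h] <;> constructor <;> norm_num
      · simp [hm]
    · intro m hm; simp [hm]
    · show _ ∈ unitCube d
      intro m
      by_cases hm : m ∈ s
      · simp only [hm, if_true]
        rcases ha m hm with h | h <;> rw [h] <;> constructor <;> norm_num
      · simp [hm]
  | succ k ih =>
    intro i hwalk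
    obtain ⟨p, hp0, hedges⟩ := hwalk
    obtain ⟨e, hsrc, hdst, hne⟩ := hedges 0 (Nat.succ_pos k)
    have hwalk' : CantorGDS.GPWalk S (face s a) (p 1) k :=
      ⟨fun l => p (l + 1), rfl, fun l hl => hedges (l + 1) (by omega)⟩
    obtain ⟨y, hyP, hyQ⟩ := ih (p 1) hwalk'
    refine ⟨S.phi e y, ?_, ?_⟩
    · exact phi_mem_face hN S s a ha e hne hyP
    · show S.phi e y ∈ CantorGDS.Q S (k + 1) i
      rw [CantorGDS.Q]
      refine Set.mem_iUnion.2 ⟨e, Set.mem_iUnion.2 ⟨by rw [hsrc, hp0], ?_⟩⟩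
      exact ⟨y, by rwa [hdst], rfl⟩

/-- **Lemma.** Let `P` be a face of `[0,1]^d` of dimension at most `d-1` and `i` a vertex.
For every `k ≥ 1`, if there is a walk of length `k` in the graph `G_P` starting from `i`,
then `P ∩ Q_{i,k} ≠ ∅`. -/
theorem gpWalk_imp_face_inter_approx
    {d N n : ℕ} (hd : 1 ≤ d) (hN : 2 ≤ N) (hn : 1 ≤ n)
    (S : CantorGDS d N n) (K : Fin n → Set (Fin d → ℝ)) (hK : S.IsAttractor K)
    (s : Finset (Fin d)) (a : Fin d → ℝ) (ha : ∀ m ∈ s, a m = 0 ∨ a m = 1)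
    (hs : s.Nonempty) (i : Fin n) (k : ℕ) (hk : 1 ≤ k)
    (hwalk : CantorGDS.GPWalk S (face s a) i k) :
    (face s a ∩ CantorGDS.Q S k i).Nonempty := by
  exact gpwalk_aux hN S s a ha k i hwalk
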